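/- Let M ≥ 2 and 0 < M_s < M/2 be natural numbers. Define α = √M / √((M−M_s) + M_s^{1/3}(M−M_s)^{2/3}) and δ = −α·((M−M_s)/M_s)^{1/3}. Then the vector g ∈ ℝ^M with g_m = δ for m < M_s and g_m = α otherwise satisfies both constraints: ∑_m g_m^2 = M and ∑_m g_m^3 = 0. -/

import Mathlib

lemma z3ro_count_sum (M Ms : ℕ) (h : Ms ≤ M) (c d : ℝ) :
    ∑ m : Fin M, (if (m : ℕ) < Ms then c else d) = Ms * c + ((M : ℝ) - Ms) * d := by
  rw [Fin.sum_univ_eq_sum_range (fun i => if i < Ms then c else d)]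
  rw [Finset.sum_ite, Finset.sum_const, Finset.sum_const]
  have h1 : (Finset.range M).filter (fun i => i < Ms) = Finset.range Ms := by
    ext i; simp only [Finset.mem_filter, Finset.mem_range]
    constructor
    · rintro ⟨_, hi⟩; exact hi
    · intro hi; exact ⟨lt_of_lt_of_le hi h, hi⟩
  have h2 : ((Finset.range M).filter (fun i => ¬ i < Ms)).card = M - Ms := by
    rw [Finset.filter_not, Finset.card_sdiff_of_subset]
    · rw [h1, Finset.card_range, Finset.card_range]
    · rw [h1]; exact Finset.range_subset_range.mpr h
  rw [h1, h2, Finset.card_range]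
  simp only [nsmul_eq_mul, Nat.cast_sub h]

theorem z3ro_satisfies_constraints (M Ms : ℕ) (hM : 2 ≤ M) (hMs : 0 < Ms)
    (hMs2 : (Ms : ℝ) < (M : ℝ) / 2)
    (α δ : ℝ)
    (hα : α = Real.sqrt M /
      Real.sqrt (((M : ℝ) - Ms) + (Ms : ℝ) ^ ((1 : ℝ)/3) * ((M : ℝ) - Ms) ^ ((2 : ℝ)/3)))
    (hδ : δ = -α * (((M : ℝ) - Ms) / Ms) ^ ((1 : ℝ)/3))
    (g : Fin M → ℝ) (hg : ∀ m : Fin M, g m = if (m : ℕ) < Ms then δ else α) :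
    (∑ m, (g m) ^ 2 = M) ∧ (∑ m, (g m) ^ 3 = 0) := by
  have hs : (0 : ℝ) < (Ms : ℝ) := by exact_mod_cast hMs
  have hMR : (2 : ℝ) ≤ (M : ℝ) := by exact_mod_cast hM
  have ha : (0 : ℝ) < (M : ℝ) - (Ms : ℝ) := by linarith
  have hle : Ms ≤ M := by
    have : (Ms : ℝ) ≤ (M : ℝ) := by linarith
    exact_mod_cast this
  have hq : (0 : ℝ) ≤ ((M : ℝ) - Ms) / Ms := le_of_lt (div_pos ha hs)
  have hcube : ((((M : ℝ) - Ms) / Ms) ^ ((1:ℝ)/3)) ^ 3 = ((M : ℝ) - Ms) / Ms := by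
    rw [← Real.rpow_natCast ((((M : ℝ) - Ms) / Ms) ^ ((1:ℝ)/3)) 3, ← Real.rpow_mul hq]
    norm_num
  have hsq : ((((M : ℝ) - Ms) / Ms) ^ ((1:ℝ)/3)) ^ 2 = (((M : ℝ) - Ms) / Ms) ^ ((2:ℝ)/3) := by
    rw [← Real.rpow_natCast ((((M : ℝ) - Ms) / Ms) ^ ((1:ℝ)/3)) 2, ← Real.rpow_mul hq]
    norm_num
  have hs23 : (0 : ℝ) < (Ms : ℝ) ^ ((2:ℝ)/3) := Real.rpow_pos_of_pos hs _
  have hss : (Ms : ℝ) ^ ((1:ℝ)/3) * (Ms : ℝ) ^ ((2:ℝ)/3) = (Ms : ℝ) := by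
    rw [← Real.rpow_add hs]; norm_num
  have hsplit : (Ms : ℝ) * (((M : ℝ) - Ms) / Ms) ^ ((2:ℝ)/3)
      = (Ms : ℝ) ^ ((1:ℝ)/3) * ((M : ℝ) - Ms) ^ ((2:ℝ)/3) := by
    rw [Real.div_rpow ha.le hs.le]
    field_simp
    linear_combination (-1 : ℝ) * hss
  have hDpos : 0 < ((M : ℝ) - Ms) + (Ms : ℝ) ^ ((1:ℝ)/3) * ((M : ℝ) - Ms) ^ ((2:ℝ)/3) := by
    have := mul_pos (Real.rpow_pos_of_pos hs ((1:ℝ)/3)) (Real.rpow_pos_of_pos ha ((2:ℝ)/3))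
    linarith
  have hα2 : α ^ 2 = (M : ℝ) / (((M : ℝ) - Ms) + (Ms : ℝ) ^ ((1:ℝ)/3) * ((M : ℝ) - Ms) ^ ((2:ℝ)/3)) := by
    rw [hα, div_pow, Real.sq_sqrt (by linarith : (0:ℝ) ≤ (M:ℝ)), Real.sq_sqrt hDpos.le]
  have hδ2 : δ ^ 2 = α ^ 2 * (((M : ℝ) - Ms) / Ms) ^ ((2:ℝ)/3) := by
    rw [hδ, mul_pow, neg_pow, hsq]; ring
  have hδ3 : δ ^ 3 = -(α ^ 3 * (((M : ℝ) - Ms) / Ms)) := by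
    rw [hδ, mul_pow, neg_pow, hcube]; ring
  have key2 : ∑ m, (g m) ^ 2 = (Ms : ℝ) * δ ^ 2 + ((M : ℝ) - Ms) * α ^ 2 := by
    rw [← z3ro_count_sum M Ms hle (δ ^ 2) (α ^ 2)]
    exact Finset.sum_congr rfl (fun m _ => by rw [hg m]; split <;> rfl)
  have key3 : ∑ m, (g m) ^ 3 = (Ms : ℝ) * δ ^ 3 + ((M : ℝ) - Ms) * α ^ 3 := by
    rw [← z3ro_count_sum M Ms hle (δ ^ 3) (α ^ 3)]
    exact Finset.sum_congr rfl (fun m _ => by rw [hg m]; split <;> rfl)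
  constructor
  · rw [key2, hδ2, hα2]
    have : (Ms : ℝ) * (α ^ 2 * (((M : ℝ) - Ms) / Ms) ^ ((2:ℝ)/3)) + ((M : ℝ) - Ms) * α ^ 2
        = α ^ 2 * ((Ms : ℝ) * (((M : ℝ) - Ms) / Ms) ^ ((2:ℝ)/3) + ((M : ℝ) - Ms)) := by ring
    rw [hα2] at this
    rw [this, hsplit]
    field_simp
    ring
  · rw [key3, hδ3]
    field_simp
    ring
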